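/- If L is the Laplacian matrix of a weighted directed graph G on N nodes and G is connected (i.e., there exists a node reachable from all other nodes), then for the index i_R of such a reachable node, the matrix L + e_{i_R} e_{i_R}^T has full rank N, where e_{i_R} is the i_R-th standard basis vector. -/

import Mathlib

open Matrix

private lemma stmt0_key {N : ℕ} (a : Fin N → Fin N → ℝ)
    (hnn : ∀ i j, 0 ≤ a i j)
    (L : Matrix (Fin N) (Fin N) ℝ)
    (hL : ∀ i j, L i j = (if i = j then ∑ k, a i k else 0) - a i j)
    (iR : Fin N) (x : Fin N → ℝ)
    (hx : (L + Matrix.single iR iR 1).mulVec x = 0) (i : Fin N) :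
    ∑ j, a i j * (x i - x j) + (if i = iR then x i else 0) = 0 := by
  have h := congrFun hx i
  simp only [Matrix.mulVec, dotProduct, Pi.zero_apply, Matrix.add_apply, add_mul] at h
  have : ∑ j, (L i j * x j + Matrix.single iR iR 1 i j * x j)
      = ∑ j, a i j * (x i - x j) + (if i = iR then x i else 0) := by
    rw [Finset.sum_add_distrib]
    congr 1
    · have : ∀ j, L i j * x j = (if i = j then (∑ k, a i k) * x i else 0) - a i j * x j := by
        intro j
        rw [hL]
        by_cases hij : i = j
        · subst hij; simp [sub_mul]
        · simp [hij, sub_mul]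
      rw [Finset.sum_congr rfl fun j _ => this j, Finset.sum_sub_distrib]
      simp [mul_sub, Finset.sum_sub_distrib, Finset.mul_sum, Finset.sum_mul]
    · by_cases hiR : i = iR
      · subst hiR
        rw [Finset.sum_eq_single i]
        · simp [Matrix.single]
        · intro b _ hb
          simp [Matrix.single, Ne.symm hb]
        · simp
      · rw [if_neg hiR]
        apply Finset.sum_eq_zero
        intro j _
        simp only [Matrix.single, Matrix.of_apply]
        rw [if_neg (by intro h; exact hiR h.1.symm), zero_mul]
  rw [this] at h
  exact h

private lemma stmt0_nonpos {N : ℕ} (a : Fin N → Fin N → ℝ)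
    (hnn : ∀ i j, 0 ≤ a i j)
    (L : Matrix (Fin N) (Fin N) ℝ)
    (hL : ∀ i j, L i j = (if i = j then ∑ k, a i k else 0) - a i j)
    (iR : Fin N)
    (hconn : ∀ j, Relation.ReflTransGen (fun u v => 0 < a u v) j iR)
    (x : Fin N → ℝ)
    (hx : (L + Matrix.single iR iR 1).mulVec x = 0) (i : Fin N) :
    x i ≤ 0 := by
  obtain ⟨u0, hu0⟩ : ∃ u0, ∀ j, x j ≤ x u0 := by
    obtain ⟨u0, _, h⟩ := Finset.exists_max_image (Finset.univ : Finset (Fin N)) x ⟨i, Finset.mem_univ i⟩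
    exact ⟨u0, fun j => h j (Finset.mem_univ j)⟩
  suffices h : x u0 ≤ 0 by exact le_trans (hu0 i) h
  by_contra hpos
  push_neg at hpos
  -- if x u = x u0 then u ≠ iR (else contradiction with key eq)
  have hnotR : ∀ u, x u = x u0 → u ≠ iR := by
    intro u hu huR
    have hk := stmt0_key a hnn L hL iR x hx u
    rw [if_pos huR] at hk
    have hsum : 0 ≤ ∑ j, a u j * (x u - x j) :=
      Finset.sum_nonneg fun j _ => mul_nonneg (hnn u j)
        (by rw [hu]; linarith [hu0 j])
    rw [hu] at hk hsum
    linarith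
  -- the max propagates along the path to iR
  have claim : ∀ u, Relation.ReflTransGen (fun u v => 0 < a u v) u iR →
      x u = x u0 → False := by
    intro u hpath
    induction hpath using Relation.ReflTransGen.head_induction_on with
    | refl => intro h; exact hnotR iR h rfl
    | head hstep hrest ih =>
      rename_i b c
      intro hb
      apply ih
      have hbR : b ≠ iR := hnotR b hb
      have hk := stmt0_key a hnn L hL iR x hx b
      rw [if_neg hbR, add_zero] at hk
      have hall := (Finset.sum_eq_zero_iff_of_nonneg
        (fun j _ => mul_nonneg (hnn b j) (by rw [hb]; linarith [hu0 j]))).mp hk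
      have hc := hall c (Finset.mem_univ c)
      have h0 : x b - x c = 0 := by
        rcases mul_eq_zero.mp hc with h | h
        · exact absurd h (ne_of_gt hstep)
        · exact h
      rw [hb] at h0
      linarith
  exact claim u0 (hconn u0) rfl

theorem stmt0 {N : ℕ} (a : Fin N → Fin N → ℝ)
    (hnn : ∀ i j, 0 ≤ a i j) (hdiag : ∀ i, a i i = 0)
    (L : Matrix (Fin N) (Fin N) ℝ)
    (hL : ∀ i j, L i j = (if i = j then ∑ k, a i k else 0) - a i j)
    (iR : Fin N)
    (hconn : ∀ j, Relation.ReflTransGen (fun u v => 0 < a u v) j iR) :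
    (L + Matrix.single iR iR 1).rank = N := by
  set M := L + Matrix.single iR iR 1 with hM
  have hker : ∀ x : Fin N → ℝ, M.mulVec x = 0 → x = 0 := by
    intro x hx
    funext j
    have h1 := stmt0_nonpos a hnn L hL iR hconn x hx j
    have h2 : (-x) j ≤ 0 := by
      apply stmt0_nonpos a hnn L hL iR hconn (-x)
      rw [Matrix.mulVec_neg, hx, neg_zero]
    simp only [Pi.neg_apply, Pi.zero_apply] at h2 ⊢
    linarith
  have hdet : M.det ≠ 0 := by
    intro hdet
    obtain ⟨v, hv, hv0⟩ := (Matrix.exists_mulVec_eq_zero_iff).mpr hdet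
    exact hv (hker v hv0)
  have : IsUnit M := (Matrix.isUnit_iff_isUnit_det M).mpr (isUnit_iff_ne_zero.mpr hdet)
  rw [Matrix.rank_of_isUnit M this, Fintype.card_fin]
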